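/- Let G and H be finitely generated groups such that in each of G and H, y⁻¹xy = x⁻¹ implies x = x⁻¹, and each of G and H is non-abelian or of exponent 2. Let 𝒮_G and 𝒮_H be quasi-optimal families of finite symmetric generating systems of G and H respectively, and suppose (η, η') is a pair of maps η: G → H, η': H → G such that (η, η') is an 𝒮_H-semi-shared quasi-isometry and (η', η) is an 𝒮_G-semi-shared quasi-isometry. Then G and H are isomorphic as groups. -/

import Mathlib

/-! Common definitions: word metrics, quasi-isometries, rough isometries. -/

/-- `g` is a product of `n` elements of `S ∪ S⁻¹`. -/
def IsWordProd {G : Type*} [Group G] (S : Set G) (g : G) (n : ℕ) : Prop :=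
  ∃ l : List G, l.length = n ∧ (∀ s ∈ l, s ∈ S ∪ S⁻¹) ∧ l.prod = g

/-- The word metric associated to a generating system `S`: the least `n` such that
`x⁻¹ * y` is a product of `n` elements of `S ∪ S⁻¹`. -/
noncomputable def wdist {G : Type*} [Group G] (S : Set G) (x y : G) : ℕ :=
  sInf {n | IsWordProd S (x⁻¹ * y) n}

/-- The word norm `‖g‖_S = d_S(e, g)`. -/
noncomputable def wnorm {G : Type*} [Group G] (S : Set G) (g : G) : ℕ :=
  wdist S 1 g

/-- `(η, η')` is a `(lam, eps)`-quasi-isometry between `(X, dX)` and `(Y, dY)`. -/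
def IsQIPair {X Y : Type*} (dX : X → X → ℝ) (dY : Y → Y → ℝ)
    (η : X → Y) (η' : Y → X) (lam eps : ℝ) : Prop :=
  (∀ x x' : X, lam⁻¹ * dX x x' - eps ≤ dY (η x) (η x') ∧
      dY (η x) (η x') ≤ lam * dX x x' + eps) ∧
  (∀ y y' : Y, lam⁻¹ * dY y y' - eps ≤ dX (η' y) (η' y') ∧
      dX (η' y) (η' y') ≤ lam * dY y y' + eps) ∧
  (∀ y : Y, dY (η (η' y)) y ≤ eps) ∧
  (∀ x : X, dX (η' (η x)) x ≤ eps)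

/-- `(η, η')` is an `eps`-isometry between `(X, dX)` and `(Y, dY)`. -/
def IsEpsIsomPair {X Y : Type*} (dX : X → X → ℝ) (dY : Y → Y → ℝ)
    (η : X → Y) (η' : Y → X) (eps : ℝ) : Prop :=
  (∀ x x' : X, |dX x x' - dY (η x) (η x')| ≤ eps) ∧
  (∀ y y' : Y, |dY y y' - dX (η' y) (η' y')| ≤ eps) ∧
  (∀ y : Y, dY (η (η' y)) y ≤ eps) ∧
  (∀ x : X, dX (η' (η x)) x ≤ eps)

/-- The real-valued word metric. -/
noncomputable def wdistR {G : Type*} [Group G] (S : Set G) (x y : G) : ℝ :=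
  (wdist S x y : ℝ)

/-- Property (★): for all `g ≠ h`, `g ≠ h⁻¹` and every positive `R` there is `S ∈ 𝒮`
containing one of `g`, `h` while the other has word norm at least `R`. -/
def PropertyStar {G : Type*} [Group G] (𝒮 : Set (Set G)) : Prop :=
  ∀ g h : G, g ≠ h → g ≠ h⁻¹ → ∀ R : ℕ, 0 < R →
    ∃ S ∈ 𝒮, (g ∈ S ∧ R ≤ wnorm S h) ∨ (h ∈ S ∧ R ≤ wnorm S g)

/-- `φ` is an `𝒮`-uniform quasi-isometry of `G`: for some fixed `λ, ε ≥ 0` and some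
`φ'`, the pair `(φ, φ')` is a `(λ, ε)`-quasi-isometry of `(G, d_S)` for every `S ∈ 𝒮`. -/
def UniformQI {G : Type*} [Group G] (𝒮 : Set (Set G)) (φ : G → G) : Prop :=
  ∃ lam eps : ℝ, 0 ≤ lam ∧ 0 ≤ eps ∧ ∃ φ' : G → G,
    ∀ S ∈ 𝒮, IsQIPair (wdistR S) (wdistR S) φ φ' lam eps

/-- `(η, η')` is an `𝒮_H`-semi-shared quasi-isometry: for some fixed `λ, ε ≥ 0`, every
generating system `S_H ∈ 𝒮_H` is matched by some finite generating system `S_G` of `G`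
making `(η, η')` a `(λ, ε)`-quasi-isometry. -/
def SemiSharedQI {G H : Type*} [Group G] [Group H] (𝒮H : Set (Set H))
    (η : G → H) (η' : H → G) : Prop :=
  ∃ lam eps : ℝ, 0 ≤ lam ∧ 0 ≤ eps ∧
    ∀ SH ∈ 𝒮H, ∃ SG : Set G, SG.Finite ∧ Subgroup.closure SG = ⊤ ∧
      IsQIPair (wdistR SG) (wdistR SH) η η' lam eps

/-- A family `𝒮` of generating systems of `G` is quasi-optimal if every `𝒮`-uniform
quasi-isometry of `G` is left translation by a unique element of `G`. -/
def QuasiOptimal {G : Type*} [Group G] (𝒮 : Set (Set G)) : Prop :=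
  ∀ φ : G → G, UniformQI 𝒮 φ → ∃! c : G, ∀ x : G, φ x = c * x

section lemmas
variable {G : Type*} [Group G] {S : Set G}

lemma isWordProd_one : IsWordProd S 1 0 := ⟨[], rfl, by simp, rfl⟩

lemma IsWordProd.mul {g h : G} {m n : ℕ} (hg : IsWordProd S g m)
    (hh : IsWordProd S h n) : IsWordProd S (g * h) (m + n) := by
  obtain ⟨l1, hl1, hm1, hp1⟩ := hg
  obtain ⟨l2, hl2, hm2, hp2⟩ := hh
  refine ⟨l1 ++ l2, by simp [hl1, hl2], ?_, by simp [hp1, hp2]⟩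
  intro s hs
  rcases List.mem_append.1 hs with h | h
  exacts [hm1 s h, hm2 s h]

lemma IsWordProd.inv {g : G} {n : ℕ} (hg : IsWordProd S g n) :
    IsWordProd S g⁻¹ n := by
  obtain ⟨l, hl, hm, hp⟩ := hg
  refine ⟨(l.map (·⁻¹)).reverse, by simp [hl], ?_, ?_⟩
  · intro s hs
    simp only [List.mem_reverse, List.mem_map] at hs
    obtain ⟨t, ht, rfl⟩ := hs
    rcases hm t ht with h | h
    · exact Or.inr (by simpa using h)
    · exact Or.inl (by simpa using h)
  · rw [List.prod_reverse_noncomm, ← hp]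
    simp

lemma exists_isWordProd (hS : Subgroup.closure S = ⊤) (g : G) :
    ∃ n, IsWordProd S g n := by
  have hg : g ∈ Subgroup.closure S := hS ▸ Subgroup.mem_top g
  induction hg using Subgroup.closure_induction with
  | mem x hx => exact ⟨1, [x], rfl, by simp [hx], by simp⟩
  | one => exact ⟨0, isWordProd_one⟩
  | mul x y _ _ ihx ihy =>
      obtain ⟨m, hm⟩ := ihx; obtain ⟨n, hn⟩ := ihy; exact ⟨m + n, hm.mul hn⟩
  | inv x _ ih => obtain ⟨m, hm⟩ := ih; exact ⟨m, hm.inv⟩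

lemma wdist_set_nonempty (hS : Subgroup.closure S = ⊤) (x y : G) :
    {n | IsWordProd S (x⁻¹ * y) n}.Nonempty := exists_isWordProd hS _

lemma wdist_self (S : Set G) (x : G) : wdist S x x = 0 :=
  Nat.sInf_eq_zero.2 (Or.inl (by simpa using (isWordProd_one : IsWordProd S 1 0)))

lemma wdist_eq_of {S : Set G} {x y x' y' : G} (h : x⁻¹ * y = x'⁻¹ * y') :
    wdist S x y = wdist S x' y' := by unfold wdist; rw [h]

lemma wdist_comm (S : Set G) (x y : G) : wdist S x y = wdist S y x := by
  unfold wdist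
  congr 1
  ext n
  constructor <;> intro h <;> simpa [mul_inv_rev] using h.inv

lemma wdist_mul_left (S : Set G) (g x y : G) :
    wdist S (g * x) (g * y) = wdist S x y :=
  wdist_eq_of (by group)

lemma wdist_triangle (hS : Subgroup.closure S = ⊤) (x y z : G) :
    wdist S x z ≤ wdist S x y + wdist S y z := by
  have h1 := Nat.sInf_mem (wdist_set_nonempty hS x y)
  have h2 := Nat.sInf_mem (wdist_set_nonempty hS y z)
  have h3 : IsWordProd S (x⁻¹ * z) (wdist S x y + wdist S y z) := by
    have h4 := h1.mul h2
    rwa [show x⁻¹ * y * (y⁻¹ * z) = x⁻¹ * z by group] at h4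
  exact Nat.sInf_le h3

lemma wdistR_nonneg (S : Set G) (x y : G) : 0 ≤ wdistR S x y := Nat.cast_nonneg _

lemma wdistR_self (S : Set G) (x : G) : wdistR S x x = 0 := by
  simp [wdistR, wdist_self]

lemma wdistR_comm (S : Set G) (x y : G) : wdistR S x y = wdistR S y x := by
  unfold wdistR; rw [wdist_comm]

lemma wdistR_mul_left (S : Set G) (g x y : G) :
    wdistR S (g * x) (g * y) = wdistR S x y := by
  unfold wdistR; rw [wdist_mul_left]

lemma wdistR_eq_of {S : Set G} {x y x' y' : G} (h : x⁻¹ * y = x'⁻¹ * y') :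
    wdistR S x y = wdistR S x' y' := by unfold wdistR; rw [wdist_eq_of h]

lemma wdistR_triangle (hS : Subgroup.closure S = ⊤) (x y z : G) :
    wdistR S x z ≤ wdistR S x y + wdistR S y z := by
  unfold wdistR; exact_mod_cast wdist_triangle hS x y z

end lemmas

section main
variable {G : Type*} [Group G]

lemma eq_of_uniform_bounded {𝒮 : Set (Set G)}
    (hgen : ∀ S ∈ 𝒮, Subgroup.closure S = ⊤)
    (hopt : QuasiOptimal 𝒮) {a b : G} {R : ℝ}
    (hb : ∀ S ∈ 𝒮, wdistR S a b ≤ R) : a = b := by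
  classical
  by_contra hab
  set u := b⁻¹ * a with hu
  have hu1 : u ≠ 1 := by
    intro h
    have h' : b⁻¹ * a = 1 := by rw [← hu]; exact h
    exact hab (inv_mul_eq_one.mp h').symm
  set φ : G → G := fun x => if x = 1 then u else x with hφ
  set M := max R 0 with hM
  have hM0 : (0 : ℝ) ≤ M := le_max_right _ _
  have hclose : ∀ S ∈ 𝒮, ∀ x, wdistR S (φ x) x ≤ M := by
    intro S hS x
    by_cases hx : x = 1
    · subst hx
      have h1 : φ 1 = u := by simp [hφ]
      rw [h1]
      have h2 : wdistR S u 1 = wdistR S a b := wdistR_eq_of (by rw [hu]; group)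
      rw [h2]
      exact le_trans (hb S hS) (le_max_left _ _)
    · have h1 : φ x = x := by simp [hφ, hx]
      rw [h1, wdistR_self]; exact hM0
  have huni : UniformQI 𝒮 φ := by
    refine ⟨1, 2 * M, zero_le_one, by linarith, φ, fun S hS => ?_⟩
    have tri := wdistR_triangle (hgen S hS)
    have sym := wdistR_comm S
    have main : ∀ x x' : G,
        (1:ℝ)⁻¹ * wdistR S x x' - 2*M ≤ wdistR S (φ x) (φ x') ∧
        wdistR S (φ x) (φ x') ≤ 1 * wdistR S x x' + 2*M := by
      intro x x'
      have h1 := hclose S hS x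
      have h2 := hclose S hS x'
      have t1 := tri (φ x) x (φ x')
      have t2 := tri x x' (φ x')
      have t3 := tri x (φ x) x'
      have t4 := tri (φ x) (φ x') x'
      have s1 := sym x' (φ x')
      have s2 := sym x (φ x)
      constructor <;> [skip; skip] <;> simp only [inv_one, one_mul] <;> linarith
    refine ⟨main, main, fun y => ?_, fun y => ?_⟩ <;>
    · have t := tri (φ (φ y)) (φ y) y
      have h1 := hclose S hS (φ y)
      have h2 := hclose S hS y
      linarith
  obtain ⟨c, hc, -⟩ := hopt φ huni
  have h1 : u = c * u := by simpa [hφ] using hc u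
  have h2 : u = c := by simpa [hφ] using hc 1
  exact hu1 (by rw [h2]; exact (mul_eq_right.mp h1.symm))

lemma translate_qi {A B : Type*} [Group A] [Group B] (SA : Set A) (SB : Set B)
    (hSB : Subgroup.closure SB = ⊤)
    (α : A → B) (β : B → A) (lam eps : ℝ) (hlam : 0 ≤ lam) (heps : 0 ≤ eps)
    (hQI : IsQIPair (wdistR SA) (wdistR SB) α β lam eps) (a : A) :
    IsQIPair (wdistR SB) (wdistR SB) (fun y => α (a * β y)) (fun y => α (a⁻¹ * β y))
      (lam * lam) ((lam + lam⁻¹ + 2) * eps) := by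
  obtain ⟨hα, hβ, hαβ, hβα⟩ := hQI
  have hinv : (0:ℝ) ≤ lam⁻¹ := inv_nonneg.2 hlam
  have hmain : ∀ c : A, ∀ y y' : B,
      (lam*lam)⁻¹ * wdistR SB y y' - (lam + lam⁻¹ + 2) * eps ≤
        wdistR SB (α (c * β y)) (α (c * β y')) ∧
      wdistR SB (α (c * β y)) (α (c * β y')) ≤
        lam*lam * wdistR SB y y' + (lam + lam⁻¹ + 2) * eps := by
    intro c y y'
    have hA := hβ y y'
    have hB := hα (c * β y) (c * β y')
    rw [wdistR_mul_left] at hB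
    have hd0 := wdistR_nonneg SB y y'
    constructor
    · rw [mul_inv]
      have h1 := mul_le_mul_of_nonneg_left hA.1 hinv
      nlinarith [hB.1, mul_nonneg hinv heps, mul_nonneg hlam heps]
    · have h1 := mul_le_mul_of_nonneg_left hA.2 hlam
      nlinarith [hB.2, mul_nonneg hinv heps, mul_nonneg hlam heps]
  have hclose : ∀ c : A, ∀ y : B,
      wdistR SB (α (c * β (α (c⁻¹ * β y)))) y ≤ (lam + lam⁻¹ + 2) * eps := by
    intro c y
    set w := c⁻¹ * β y with hw
    have h1 : wdistR SA (β (α w)) w ≤ eps := hβα w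
    have h2 : wdistR SA (c * β (α w)) (β y) = wdistR SA (β (α w)) w := by
      have : β y = c * w := by rw [hw]; group
      rw [this, wdistR_mul_left]
    have h3 := (hα (c * β (α w)) (β y)).2
    rw [h2] at h3
    have h4 := hαβ y
    have t := wdistR_triangle hSB (α (c * β (α w))) (α (β y)) y
    nlinarith [mul_nonneg hinv heps, mul_le_mul_of_nonneg_left h1 hlam]
  refine ⟨fun y y' => hmain a y y', fun y y' => hmain a⁻¹ y y',
    fun y => hclose a y, fun y => by simpa using hclose a⁻¹ y⟩

end main

/-- If `G` and `H` (each satisfying `x^y = x⁻¹ ⟹ x = x⁻¹` and each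
non-abelian or of exponent 2) carry quasi-optimal families of finite symmetric generating
systems and there is a pair `(η, η')` which is both an `𝒮_H`-semi-shared and (reversed)
an `𝒮_G`-semi-shared quasi-isometry, then `G ≅ H`. -/
theorem semishared_qi_implies_isomorphic {G H : Type*} [Group G] [Group H]
    [Group.FG G] [Group.FG H]
    (hconjG : ∀ x y : G, y⁻¹ * x * y = x⁻¹ → x = x⁻¹)
    (hconjH : ∀ x y : H, y⁻¹ * x * y = x⁻¹ → x = x⁻¹)
    (hGna : (¬ ∀ a b : G, a * b = b * a) ∨ ∀ x : G, x * x = 1)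
    (hHna : (¬ ∀ a b : H, a * b = b * a) ∨ ∀ x : H, x * x = 1)
    (𝒮G : Set (Set G)) (𝒮H : Set (Set H))
    (h𝒮G : ∀ S ∈ 𝒮G, S.Finite ∧ S⁻¹ = S ∧ Subgroup.closure S = ⊤)
    (h𝒮H : ∀ S ∈ 𝒮H, S.Finite ∧ S⁻¹ = S ∧ Subgroup.closure S = ⊤)
    (hoptG : QuasiOptimal 𝒮G) (hoptH : QuasiOptimal 𝒮H)
    (η : G → H) (η' : H → G)
    (hη : SemiSharedQI 𝒮H η η') (hη' : SemiSharedQI 𝒮G η' η) :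
    Nonempty (G ≃* H) := by
  obtain ⟨lam1, eps1, hlam1, heps1, hη1⟩ := hη
  obtain ⟨lam2, eps2, hlam2, heps2, hη2⟩ := hη'
  have hgenG : ∀ S ∈ 𝒮G, Subgroup.closure S = ⊤ := fun S hS => (h𝒮G S hS).2.2
  have hgenH : ∀ S ∈ 𝒮H, Subgroup.closure S = ⊤ := fun S hS => (h𝒮H S hS).2.2
  set θ : H → G := fun h => η' (h * η 1) with hθ
  set θ' : G → H := fun g => η (g * η' 1) with hθ'
  -- translation lemma for maps G → G
  have keyG : ∀ (h : H) (x : G), η' (h * η x) = θ h * x := by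
    intro h
    have huni : UniformQI 𝒮G (fun x => η' (h * η x)) := by
      have h2inv : (0:ℝ) ≤ lam2⁻¹ := inv_nonneg.2 hlam2
      refine ⟨lam2 * lam2, (lam2 + lam2⁻¹ + 2) * eps2, mul_nonneg hlam2 hlam2,
        mul_nonneg (by linarith) heps2, fun x => η' (h⁻¹ * η x), fun S hS => ?_⟩
      obtain ⟨SH, -, -, hQI⟩ := hη2 S hS
      exact translate_qi SH S (hgenG S hS) η' η lam2 eps2 hlam2 heps2 hQI h
    obtain ⟨c, hc, -⟩ := hoptG _ huni
    have hc1 : η' (h * η 1) = c := by simpa using hc 1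
    intro x
    rw [hc x, ← hc1, hθ]
  have keyH : ∀ (g : G) (y : H), η (g * η' y) = θ' g * y := by
    intro g
    have huni : UniformQI 𝒮H (fun y => η (g * η' y)) := by
      have h1inv : (0:ℝ) ≤ lam1⁻¹ := inv_nonneg.2 hlam1
      refine ⟨lam1 * lam1, (lam1 + lam1⁻¹ + 2) * eps1, mul_nonneg hlam1 hlam1,
        mul_nonneg (by linarith) heps1, fun y => η (g⁻¹ * η' y), fun S hS => ?_⟩
      obtain ⟨SG, -, -, hQI⟩ := hη1 S hS
      exact translate_qi SG S (hgenH S hS) η η' lam1 eps1 hlam1 heps1 hQI g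
    obtain ⟨c, hc, -⟩ := hoptH _ huni
    have hc1 : η (g * η' 1) = c := by simpa using hc 1
    intro y
    rw [hc y, ← hc1, hθ']
  -- θ is a homomorphism
  have θhom : ∀ h1 h2 : H, θ (h1 * h2) = θ h1 * θ h2 := by
    intro h1 h2
    refine eq_of_uniform_bounded hgenG hoptG (R := lam2 * eps2 + eps2) (fun S hS => ?_)
    obtain ⟨SH, -, -, hQI⟩ := hη2 S hS
    obtain ⟨hα, hβ, hαβ, hβα⟩ := hQI
    have e1 : θ h1 * θ h2 = η' (h1 * η (θ h2)) := (keyG h1 (θ h2)).symm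
    have e2 : θ (h1 * h2) = η' ((h1 * h2) * η 1) := by rw [hθ]
    rw [e1, e2]
    have hb := (hα ((h1 * h2) * η 1) (h1 * η (θ h2))).2
    have hd : wdistR SH ((h1 * h2) * η 1) (h1 * η (θ h2)) ≤ eps2 := by
      have e3 : (h1 * h2) * η 1 = h1 * (h2 * η 1) := by rw [mul_assoc]
      have e4 : θ h2 = η' (h2 * η 1) := by rw [hθ]
      rw [e3, e4, wdistR_mul_left, wdistR_comm]
      exact hβα (h2 * η 1)
    nlinarith [mul_le_mul_of_nonneg_left hd hlam2]
  -- θ' ∘ θ = id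
  have hleft : ∀ h : H, θ' (θ h) = h := by
    intro h
    refine eq_of_uniform_bounded hgenH hoptH (R := 2 * eps1) (fun S hS => ?_)
    obtain ⟨SG, -, -, hQI⟩ := hη1 S hS
    obtain ⟨hα, hβ, hαβ, hβα⟩ := hQI
    have e1 : θ' (θ h) = η (η' (h * η (η' 1))) := by
      have e2 : θ h * η' 1 = η' (h * η (η' 1))  := by
        rw [← keyG h (η' 1)]
      show η (θ h * η' 1) = _
      rw [e2]
    rw [e1]
    set w := h * η (η' 1) with hw
    have t := wdistR_triangle (hgenH S hS) (η (η' w)) w h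
    have h1 := hαβ w
    have h2 : wdistR S w h ≤ eps1 := by
      have e3 : wdistR S (h * η (η' 1)) (h * 1) ≤ eps1 := by
        rw [wdistR_mul_left]; exact hαβ 1
      simpa [hw] using e3
    linarith
  -- θ ∘ θ' = id
  have hright : ∀ g : G, θ (θ' g) = g := by
    intro g
    refine eq_of_uniform_bounded hgenG hoptG (R := 2 * eps2) (fun S hS => ?_)
    obtain ⟨SH, -, -, hQI⟩ := hη2 S hS
    obtain ⟨hα, hβ, hαβ, hβα⟩ := hQI
    have e1 : θ (θ' g) = η' (η (g * η' (η 1))) := by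
      have e2 : θ' g * η 1 = η (g * η' (η 1)) := by
        rw [← keyH g (η 1)]
      show η' (θ' g * η 1) = _
      rw [e2]
    rw [e1]
    set w := g * η' (η 1) with hw
    have t := wdistR_triangle (hgenG S hS) (η' (η w)) w g
    have h1 := hαβ w
    have h2 : wdistR S w g ≤ eps2 := by
      have e3 : wdistR S (g * η' (η 1)) (g * 1) ≤ eps2 := by
        rw [wdistR_mul_left]; exact hαβ 1
      simpa [hw] using e3
    linarith
  exact ⟨(MulEquiv.mk ⟨θ, θ', hleft, hright⟩ (fun h1 h2 => θhom h1 h2)).symm⟩
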